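/- arXiv:1004.4725 — 2 statements merged into one kernel-verified Lean document; each statement's English description precedes it below -/
import Mathlib

section
/- Let A be a finite abelian group with a quadratic function q, and let (B,β) be a Schellekens pair for (A,q). Then Γ(B,β) = {(a, a⁻¹b) | a ∈ A, b ∈ B, σ(c,a) = β(c,b) for all c ∈ B} is a subgroup of A × A, and it is isotropic for the quadratic function q×q⁻¹, i.e. q(x)q(y)⁻¹ = 1 for every (x,y) ∈ Γ(B,β). -/
/-- The bicharacter `σ(a,b) = q(ab) q(a)⁻¹ q(b)⁻¹` associated to `q`. -/
def qSigma {A : Type*} [CommGroup A] (q : A → ℂˣ) (a b : A) : ℂˣ :=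
  q (a * b) * (q a)⁻¹ * (q b)⁻¹

/-- `q` is a quadratic function: `q(a⁻¹) = q(a)` and the associated `σ` is
multiplicative in each argument. -/
def IsQuadratic {A : Type*} [CommGroup A] (q : A → ℂˣ) : Prop :=
  (∀ a : A, q a⁻¹ = q a) ∧
  (∀ a b c : A, qSigma q (a * b) c = qSigma q a c * qSigma q b c) ∧
  (∀ a b c : A, qSigma q a (b * c) = qSigma q a b * qSigma q a c)

/-- `q` is nondegenerate: for every `a ≠ 1` the homomorphism `σ(a,−)` is nontrivial. -/
def IsNondeg {A : Type*} [CommGroup A] (q : A → ℂˣ) : Prop :=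
  ∀ a : A, a ≠ 1 → ∃ b : A, qSigma q a b ≠ 1

/-- `(B, β)` is a Schellekens pair for `(A, q)`: `β` is symmetric, multiplicative
in each argument, and `β(b,b) = q(b)` on the subgroup `B`. -/
def IsSchellekens {A : Type*} [CommGroup A] (q : A → ℂˣ) (B : Subgroup A)
    (β : B → B → ℂˣ) : Prop :=
  (∀ b c : B, β b c = β c b) ∧
  (∀ b c d : B, β (b * c) d = β b d * β c d) ∧
  (∀ b c d : B, β b (c * d) = β b c * β b d) ∧
  (∀ b : B, β b b = q (b : A))

/-- `Γ(B,β) = {(a, a⁻¹ b) | a ∈ A, b ∈ B, σ(c,a) = β(c,b) ∀ c ∈ B}` as a subset of `A × A`. -/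
def GammaSet {A : Type*} [CommGroup A] (q : A → ℂˣ) (B : Subgroup A)
    (β : B → B → ℂˣ) : Set (A × A) :=
  {z | ∃ b : B, z.2 = z.1⁻¹ * (b : A) ∧ ∀ c : B, qSigma q (c : A) z.1 = β c b}

/-- The bicharacter `τ((a,b),(c,d)) = σ(a,c) σ(b,d)⁻¹` on `A × A`
associated to the quadratic function `q × q⁻¹`. -/
def qTau {A : Type*} [CommGroup A] (q : A → ℂˣ) (z w : A × A) : ℂˣ :=
  qSigma q z.1 w.1 * (qSigma q z.2 w.2)⁻¹

section Aux
variable {A : Type*} [CommGroup A] (q : A → ℂˣ)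

lemma sigma_comm (a b : A) : qSigma q a b = qSigma q b a := by
  unfold qSigma; rw [mul_comm a b, mul_right_comm]

lemma sigma_one_right (hq : IsQuadratic q) (a : A) : qSigma q a 1 = 1 := by
  have h := hq.2.2 a 1 1
  rw [one_mul] at h
  exact (left_eq_mul.mp h)

lemma sigma_inv_right (hq : IsQuadratic q) (a b : A) :
    qSigma q a b⁻¹ = (qSigma q a b)⁻¹ := by
  have h := hq.2.2 a b b⁻¹
  rw [mul_inv_cancel, sigma_one_right q hq] at h
  exact eq_inv_of_mul_eq_one_left (by rw [mul_comm]; exact h.symm)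

lemma q_of_one (hq : IsQuadratic q) : q 1 = 1 := by
  have h := sigma_one_right q hq 1
  unfold qSigma at h
  rw [one_mul] at h
  group at h
  simpa using h

lemma sigma_eq (hq : IsQuadratic q) (a b : A) :
    q (a * b) = qSigma q a b * q a * q b := by
  unfold qSigma
  rw [mul_assoc, mul_assoc, mul_comm (q a), inv_mul_cancel_left, inv_mul_cancel_right]

end Aux


/-- `Γ(B,β)` is a subgroup of `A × A`, and it is isotropic for `q × q⁻¹`. -/
theorem gammaSet_subgroup_and_isotropic {A : Type*} [CommGroup A] [Fintype A]
    (q : A → ℂˣ) (hq : IsQuadratic q) (B : Subgroup A) (β : B → B → ℂˣ)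
    (hβ : IsSchellekens q B β) :
    ∃ Γ : Subgroup (A × A), (Γ : Set (A × A)) = GammaSet q B β ∧
      ∀ z ∈ GammaSet q B β, q z.1 * (q z.2)⁻¹ = 1 := by
  obtain ⟨hsym, hβl, hβr, hββ⟩ := hβ
  have hβone : ∀ c : B, β c 1 = 1 := fun c => by
    have h := hβr c 1 1; rw [one_mul] at h; exact (left_eq_mul.mp h)
  have hβinv : ∀ c b : B, β c b⁻¹ = (β c b)⁻¹ := fun c b => by
    have h := hβr c b b⁻¹
    rw [mul_inv_cancel, hβone] at h
    exact eq_inv_of_mul_eq_one_left (by rw [mul_comm]; exact h.symm)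
  refine ⟨{ carrier := GammaSet q B β
            one_mem' := ⟨1, by simp, fun c => by
              simp [sigma_one_right q hq, hβone]⟩
            mul_mem' := ?_
            inv_mem' := ?_ }, rfl, ?_⟩
  · rintro x y ⟨b, hb2, hbσ⟩ ⟨b', hb2', hbσ'⟩
    refine ⟨b * b', ?_, fun c => ?_⟩
    · show x.2 * y.2 = (x.1 * y.1)⁻¹ * _
      rw [hb2, hb2']
      push_cast
      simp [mul_assoc, mul_comm, mul_left_comm]
    · show qSigma q (c : A) (x.1 * y.1) = _
      rw [hq.2.2, hbσ c, hbσ' c, hβr]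
  · rintro x ⟨b, hb2, hbσ⟩
    refine ⟨b⁻¹, ?_, fun c => ?_⟩
    · show x.2⁻¹ = (x.1⁻¹)⁻¹ * _
      rw [hb2]
      push_cast
      simp [mul_assoc, mul_comm, mul_left_comm]
    · show qSigma q (c : A) x.1⁻¹ = _
      rw [sigma_inv_right q hq, hbσ c, hβinv]
  · rintro z ⟨b, hb2, hbσ⟩
    have key : qSigma q (b : A) z.1 = q (b : A) := by rw [hbσ b, hββ]
    have : q z.2 = q z.1 := by
      rw [hb2, sigma_eq q hq, sigma_comm, sigma_inv_right q hq, key, hq.1]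
      simp [mul_assoc, mul_comm, mul_left_comm]
    rw [this, mul_inv_cancel]
end

section
/- Let A be a finite abelian group with a nondegenerate quadratic function q, and let (B,β) be a Schellekens pair for (A,q). Consider the maps ι : Γ(B,β) → A × B, ι(u,v) = (u, uv) (note that uv ∈ B for every (u,v) ∈ Γ(B,β)), and p : A × B → B̂, p(a,b) = (c ↦ σ(c,a)β(c,b)⁻¹), where B̂ = Hom(B,ℂˣ) is the dual group of B. Then ι is an injective group homomorphism, p is a surjective group homomorphism, and the image of ι equals the kernel of p; that is, Γ(B,β) → A × B → B̂ is a short exact sequence. -/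
lemma dual_card (G : Type*) [CommGroup G] [Finite G] :
    Nat.card (G →* ℂˣ) = Nat.card G := by
  have : NeZero (Monoid.exponent G) := ⟨Monoid.exponent_ne_zero_of_finite⟩
  obtain ⟨e⟩ := CommGroup.monoidHom_mulEquiv_of_hasEnoughRootsOfUnity G ℂ
  exact Nat.card_congr e.toEquiv

lemma dual_finite (G : Type*) [CommGroup G] [Finite G] : Finite (G →* ℂˣ) :=
  Nat.finite_of_card_ne_zero (by rw [dual_card]; exact Nat.card_pos.ne')

lemma restrict_surjective {A : Type*} [CommGroup A] [Finite A] (B : Subgroup A) :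
    Function.Surjective (fun χ : A →* ℂˣ => χ.domRestrict B) := by
  have hFinA := dual_finite A
  have hFinB := dual_finite B
  let res : (A →* ℂˣ) →* (B →* ℂˣ) :=
    { toFun := fun χ => χ.domRestrict B
      map_one' := rfl
      map_mul' := fun _ _ => rfl }
  have hker : Nat.card res.ker = Nat.card (A ⧸ B) := by
    have e : ((A ⧸ B) →* ℂˣ) ≃ res.ker :=
      { toFun := fun χ => ⟨χ.comp (QuotientGroup.mk' B), by
          refine MonoidHom.ext fun b => ?_
          have hb : ((b : A) : A ⧸ B) = 1 := (QuotientGroup.eq_one_iff _).mpr b.2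
          show χ ((b : A) : A ⧸ B) = 1; simp [res, hb]⟩
        invFun := fun ψ => QuotientGroup.lift B ψ.1 (fun b hb => by
          have := ψ.2
          simp only [MonoidHom.mem_ker] at this
          have := DFunLike.congr_fun this ⟨b, hb⟩
          exact this)
        left_inv := fun χ => by
          ext x
          rfl
        right_inv := fun ψ => by
          ext b
          rfl }
    rw [← Nat.card_congr e, dual_card]
  have h1 : Nat.card ((A →* ℂˣ) ⧸ res.ker) * Nat.card res.ker = Nat.card (A →* ℂˣ) :=
    (Subgroup.card_eq_card_quotient_mul_card_subgroup res.ker).symm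
  have h2 : Nat.card (A ⧸ B) * Nat.card B = Nat.card A :=
    (Subgroup.card_eq_card_quotient_mul_card_subgroup B).symm
  have hrange : Nat.card res.range = Nat.card ((A →* ℂˣ) ⧸ res.ker) :=
    (Nat.card_congr (QuotientGroup.quotientKerEquivRange res).toEquiv).symm
  have hcard : Nat.card res.range = Nat.card (B →* ℂˣ) := by
    have hq : 0 < Nat.card (A ⧸ B) := Nat.card_pos
    have key : Nat.card res.range * Nat.card res.ker = Nat.card (A ⧸ B) * Nat.card B := by
      rw [hrange, h1, dual_card, h2]
    rw [hker] at key
    rw [dual_card]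
    exact Nat.eq_of_mul_eq_mul_right hq (key.trans (mul_comm _ _))
  have : res.range = ⊤ := Subgroup.eq_top_of_card_eq _ hcard
  intro χ
  obtain ⟨φ, hφ⟩ := (MonoidHom.range_eq_top.mp this) χ
  exact ⟨φ, hφ⟩

/-- the short exact sequence `Γ(B,β) → A × B → B̂`, where the first map is
`(u,v) ↦ (u, uv)` and the second sends `(a,b)` to the character `c ↦ σ(c,a) β(c,b)⁻¹`. -/
theorem gamma_ses {A : Type*} [CommGroup A] [Fintype A]
    (q : A → ℂˣ) (hq : IsQuadratic q) (hnd : IsNondeg q)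
    (B : Subgroup A) (β : B → B → ℂˣ) (hβ : IsSchellekens q B β)
    (Γ : Subgroup (A × A)) (hΓ : (Γ : Set (A × A)) = GammaSet q B β) :
    ∃ (ι : Γ →* A × B) (p : (A × B) →* (B →* ℂˣ)),
      (∀ z : Γ, (ι z).1 = (z : A × A).1 ∧
        ((ι z).2 : A) = (z : A × A).1 * (z : A × A).2) ∧
      (∀ (a : A) (b : B) (c : B), p (a, b) c = qSigma q (c : A) a * (β c b)⁻¹) ∧
      Function.Injective ι ∧ Function.Surjective p ∧ ι.range = p.ker := by
  obtain ⟨hqinv, hσl, hσr⟩ := hq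
  obtain ⟨hβsymm, hβl, hβr, hββ⟩ := hβ
  -- basic facts
  have hσ1l : ∀ a : A, qSigma q 1 a = 1 := fun a => by
    have := hσl 1 1 a; rw [mul_one] at this; exact left_eq_mul.mp this
  have hσ1r : ∀ a : A, qSigma q a 1 = 1 := fun a => by
    have := hσr a 1 1; rw [mul_one] at this; exact left_eq_mul.mp this
  have hσcomm : ∀ a b : A, qSigma q a b = qSigma q b a := fun a b => by
    unfold qSigma; rw [mul_comm a b, mul_right_comm]
  have hβ1l : ∀ b : B, β 1 b = 1 := fun b => by
    have := hβl 1 1 b; rw [mul_one] at this; exact left_eq_mul.mp this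
  have hβ1r : ∀ b : B, β b 1 = 1 := fun b => by
    have := hβr b 1 1; rw [mul_one] at this; exact left_eq_mul.mp this
  -- the map a ↦ σ(·, a), a bijection A ≃ Â
  let f : A →* (A →* ℂˣ) :=
    { toFun := fun a =>
        { toFun := fun c => qSigma q c a
          map_one' := hσ1l a
          map_mul' := fun x y => hσl x y a }
      map_one' := MonoidHom.ext fun c => hσ1r c
      map_mul' := fun x y => MonoidHom.ext fun c => hσr c x y }
  have hfinj : Function.Injective f := by
    refine (injective_iff_map_eq_one f).mpr fun a ha => ?_
    by_contra h
    obtain ⟨b, hb⟩ := hnd a h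
    exact hb (by have := DFunLike.congr_fun ha b; simpa [f, hσcomm a b] using this)
  have : NeZero (Monoid.exponent A) := ⟨Monoid.exponent_ne_zero_of_finite⟩
  obtain ⟨e⟩ := CommGroup.monoidHom_mulEquiv_of_hasEnoughRootsOfUnity A ℂ
  have hfsurj : Function.Surjective f :=
    (Finite.injective_iff_surjective_of_equiv e.symm.toEquiv).mp hfinj
  -- membership in B of products from Γ
  have hmemB : ∀ z : Γ, (z : A × A).1 * (z : A × A).2 ∈ B := fun z => by
    have hz : (z : A × A) ∈ GammaSet q B β := by rw [← hΓ]; exact z.2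
    obtain ⟨b, hb, -⟩ := hz
    rw [hb, mul_inv_cancel_left]; exact b.2
  -- the two homomorphisms
  refine ⟨{ toFun := fun z => ((z : A × A).1, ⟨(z : A × A).1 * (z : A × A).2, hmemB z⟩)
            map_one' := Prod.ext rfl (Subtype.ext (by simp))
            map_mul' := fun z w => Prod.ext (by simp) (Subtype.ext (by
              simp [mul_mul_mul_comm])) },
         { toFun := fun x =>
             { toFun := fun c => qSigma q (c : A) x.1 * (β c x.2)⁻¹
               map_one' := by
                 show qSigma q ((1 : B) : A) x.1 * (β 1 x.2)⁻¹ = 1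
                 rw [show ((1 : B) : A) = 1 from rfl, hσ1l, hβ1l, inv_one, mul_one]
               map_mul' := fun c d => by
                 show qSigma q ((c * d : B) : A) x.1 * (β (c * d) x.2)⁻¹ =
                   (qSigma q (c : A) x.1 * (β c x.2)⁻¹) *
                     (qSigma q (d : A) x.1 * (β d x.2)⁻¹)
                 rw [show ((c * d : B) : A) = (c : A) * (d : A) from rfl,
                   hσl, hβl, mul_inv, mul_mul_mul_comm] }
           map_one' := MonoidHom.ext fun c => by
             show qSigma q (c : A) 1 * (β c 1)⁻¹ = 1
             rw [hσ1r, hβ1r, inv_one, mul_one]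
           map_mul' := fun x y => MonoidHom.ext fun c => by
             show qSigma q (c : A) (x.1 * y.1) * (β c (x.2 * y.2))⁻¹ =
               (qSigma q (c : A) x.1 * (β c x.2)⁻¹) *
                 (qSigma q (c : A) y.1 * (β c y.2)⁻¹)
             rw [hσr, hβr, mul_inv, mul_mul_mul_comm] },
         fun z => ⟨rfl, rfl⟩, fun a b c => rfl, ?_, ?_, ?_⟩
  · -- injectivity
    intro z w h
    have h1 : (z : A × A).1 = (w : A × A).1 := congrArg (fun t : A × B => t.1) h
    have h2 : (z : A × A).1 * (z : A × A).2 = (w : A × A).1 * (w : A × A).2 :=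
      congrArg (fun t : A × B => ((t.2 : B) : A)) h
    rw [h1] at h2
    exact Subtype.ext (Prod.ext h1 (mul_left_cancel h2))
  · -- surjectivity
    intro χ
    obtain ⟨φ, hφ⟩ := restrict_surjective B χ
    obtain ⟨a, ha⟩ := hfsurj φ
    refine ⟨(a, 1), MonoidHom.ext fun c => ?_⟩
    show qSigma q (c : A) a * (β c 1)⁻¹ = χ c
    rw [hβ1r, inv_one, mul_one, ← hφ]
    exact DFunLike.congr_fun ha (c : A)
  · -- range = kernel
    ext x
    simp only [MonoidHom.mem_range, MonoidHom.mem_ker]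
    constructor
    · rintro ⟨z, rfl⟩
      have hz : (z : A × A) ∈ GammaSet q B β := by rw [← hΓ]; exact z.2
      obtain ⟨b, hb1, hb2⟩ := hz
      have hbe : (⟨(z : A × A).1 * (z : A × A).2, hmemB z⟩ : B) = b :=
        Subtype.ext (show (z : A × A).1 * (z : A × A).2 = (b : A) by
          rw [hb1, mul_inv_cancel_left])
      refine MonoidHom.ext fun c => ?_
      show qSigma q (c : A) (z : A × A).1 *
        (β c ⟨(z : A × A).1 * (z : A × A).2, hmemB z⟩)⁻¹ = 1
      rw [hbe, hb2 c, mul_inv_cancel]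
    · intro hx
      have hc : ∀ c : B, qSigma q (c : A) x.1 = β c x.2 := fun c => by
        have := DFunLike.congr_fun hx c
        rw [MonoidHom.one_apply] at this
        exact mul_inv_eq_one.mp this
      have hzmem : (x.1, x.1⁻¹ * (x.2 : A)) ∈ Γ := by
        rw [← SetLike.mem_coe, hΓ]; exact ⟨x.2, rfl, hc⟩
      refine ⟨⟨(x.1, x.1⁻¹ * (x.2 : A)), hzmem⟩, ?_⟩
      exact Prod.ext rfl (Subtype.ext (by simp))
end
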